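/- The vector field b admits infinitely many distinct regular Lagrangian flows: for any Θ, Φ ∈ (0,2π] with Θ ≠ Φ and any t > 0, the set { 𝐱 ∈ ℝ³ \ {0} : X^Θ(t,𝐱) ≠ X^Φ(t,𝐱) } has positive Lebesgue measure (it contains, up to a null set, the set of points (x,y,z) ∈ P⁺ with 0 < z² < 4t and (x,y) ≠ (0,0)). -/
import Mathlib


open MeasureTheory Real Set Filter Topology
open scoped ENNReal

noncomputable section

/-- The upper paraboloid `P⁺ = {(x,y,z) : x² + y² ≤ z}`. -/
def Pplus : Set (ℝ × ℝ × ℝ) := {p | p.1 ^ 2 + p.2.1 ^ 2 ≤ p.2.2}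

/-- The lower paraboloid `P⁻ = {(x,y,z) : x² + y² ≤ -z}`. -/
def Pminus : Set (ℝ × ℝ × ℝ) := {p | p.1 ^ 2 + p.2.1 ^ 2 ≤ -p.2.2}

/-- `P = P⁺ ∪ P⁻`. -/
def PP : Set (ℝ × ℝ × ℝ) := Pplus ∪ Pminus

open scoped Classical in
/-- The vector field `b(x,y,z) = (-sgn z · x/z², -sgn z · y/z², -2/|z|)` on `P \ {z = 0}`,
and `0` elsewhere. -/
def bb : ℝ × ℝ × ℝ → ℝ × ℝ × ℝ := fun p =>
  if p ∈ PP ∧ p.2.2 ≠ 0 then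
    (-(Real.sign p.2.2) * p.1 / p.2.2 ^ 2,
     -(Real.sign p.2.2) * p.2.1 / p.2.2 ^ 2,
     -2 / |p.2.2|)
  else (0, 0, 0)

open scoped Classical in
/-- The flow `X^Θ` of `b`: identity outside `P`; the explicit solution on `P⁻`;
on `P⁺` the trajectory falls to the origin at time `z²/4` and then continues into `P⁻`
rotated by the angle `Θ` in the `xy`-plane. -/
def XTheta (Θ : ℝ) (t : ℝ) (p : ℝ × ℝ × ℝ) : ℝ × ℝ × ℝ :=
  let x := p.1; let y := p.2.1; let z := p.2.2
  if x ^ 2 + y ^ 2 ≤ -z ∧ z < 0 then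
    (x / Real.sqrt (-z) * (z ^ 2 + 4 * t) ^ ((1 : ℝ) / 4),
     y / Real.sqrt (-z) * (z ^ 2 + 4 * t) ^ ((1 : ℝ) / 4),
     -Real.sqrt (z ^ 2 + 4 * t))
  else if x ^ 2 + y ^ 2 ≤ z ∧ 0 < z then
    if t ≤ z ^ 2 / 4 then
      (x / Real.sqrt z * (z ^ 2 - 4 * t) ^ ((1 : ℝ) / 4),
       y / Real.sqrt z * (z ^ 2 - 4 * t) ^ ((1 : ℝ) / 4),
       Real.sqrt (z ^ 2 - 4 * t))
    else
      ((x * Real.cos Θ - y * Real.sin Θ) / Real.sqrt z * (4 * t - z ^ 2) ^ ((1 : ℝ) / 4),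
       (x * Real.sin Θ + y * Real.cos Θ) / Real.sqrt z * (4 * t - z ^ 2) ^ ((1 : ℝ) / 4),
       -Real.sqrt (4 * t - z ^ 2))
  else p

set_option maxHeartbeats 1000000 in
/-- The vector field `b` admits infinitely many distinct regular Lagrangian flows:
for `Θ ≠ Φ` in `(0,2π]` and any `t > 0`, the set of nonzero points where
`X^Θ(t,·)` and `X^Φ(t,·)` disagree has positive Lebesgue measure. -/
theorem XTheta_nonuniqueness (Θ Φ : ℝ) (hΘ : Θ ∈ Set.Ioc 0 (2 * Real.pi))
    (hΦ : Φ ∈ Set.Ioc 0 (2 * Real.pi)) (hne : Θ ≠ Φ) (t : ℝ) (ht : 0 < t) :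
    0 < volume {p : ℝ × ℝ × ℝ | p ≠ 0 ∧ XTheta Θ t p ≠ XTheta Φ t p} := by
  set c := min 1 (Real.sqrt t) with hc
  have hc0 : 0 < c := lt_min one_pos (Real.sqrt_pos.2 ht)
  have hc1 : c ≤ 1 := min_le_left _ _
  have hct : c ≤ Real.sqrt t := min_le_right _ _
  have hct2 : c ^ 2 ≤ t := by
    calc c ^ 2 ≤ Real.sqrt t ^ 2 := by nlinarith
    _ = t := Real.sq_sqrt ht.le
  set B : Set (ℝ × ℝ × ℝ) := Ioo (c/4) (c/2) ×ˢ Ioo (c/4) (c/2) ×ˢ Ioo (c/2) c with hB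
  have hsub : B ⊆ {p : ℝ × ℝ × ℝ | p ≠ 0 ∧ XTheta Θ t p ≠ XTheta Φ t p} := by
    rintro ⟨x, y, z⟩ hp
    simp only [hB, Set.mem_prod, Set.mem_Ioo] at hp
    obtain ⟨⟨hx1, hx2⟩, ⟨hy1, hy2⟩, hz1, hz2⟩ := hp
    have hz0 : 0 < z := lt_trans (by positivity) hz1
    have hxy : x ^ 2 + y ^ 2 ≤ z := by nlinarith
    have hzt : z ^ 2 < 4 * t := by nlinarith
    have hnle : ¬ t ≤ z ^ 2 / 4 := by linarith
    have hnot1 : ¬ (x ^ 2 + y ^ 2 ≤ -z ∧ z < 0) := by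
      rintro ⟨-, h⟩; linarith
    constructor
    · intro h
      have : z = 0 := congrArg (fun q : ℝ × ℝ × ℝ => q.2.2) h
      linarith
    · intro heq
      simp only [XTheta, if_neg hnot1, if_pos (And.intro hxy hz0), if_neg hnle,
        Prod.mk.injEq] at heq
      obtain ⟨h1, h2, -⟩ := heq
      have hw : (0:ℝ) < (4 * t - z ^ 2) ^ ((1:ℝ)/4) :=
        Real.rpow_pos_of_pos (by linarith) _
      have hs : (0:ℝ) < Real.sqrt z := Real.sqrt_pos.2 hz0
      have h1' : x * Real.cos Θ - y * Real.sin Θ = x * Real.cos Φ - y * Real.sin Φ := by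
        have h := mul_right_cancel₀ hw.ne' h1
        rw [div_eq_div_iff hs.ne' hs.ne'] at h
        exact mul_right_cancel₀ hs.ne' h
      have h2' : x * Real.sin Θ + y * Real.cos Θ = x * Real.sin Φ + y * Real.cos Φ := by
        have h := mul_right_cancel₀ hw.ne' h2
        rw [div_eq_div_iff hs.ne' hs.ne'] at h
        exact mul_right_cancel₀ hs.ne' h
      set a := Real.cos Θ - Real.cos Φ with ha
      set b := Real.sin Θ - Real.sin Φ with hb
      have e1 : x * a - y * b = 0 := by rw [ha, hb]; ring_nf; linarith [h1']
      have e2 : x * b + y * a = 0 := by rw [ha, hb]; ring_nf; linarith [h2']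
      have hx0 : 0 < x := lt_trans (by positivity) hx1
      have key : (x ^ 2 + y ^ 2) * (a ^ 2 + b ^ 2) = 0 := by
        have hk : (x ^ 2 + y ^ 2) * (a ^ 2 + b ^ 2) = (x*a - y*b)^2 + (x*b + y*a)^2 := by ring
        rw [hk, e1, e2]; ring
      have hab : a ^ 2 + b ^ 2 = 0 := by
        have hxy0 : 0 < x ^ 2 + y ^ 2 := by positivity
        exact (mul_eq_zero.1 key).resolve_left hxy0.ne'
      have ha0 : a = 0 := by
        have h2 : a ^ 2 = 0 := le_antisymm (by linarith [sq_nonneg b]) (sq_nonneg a)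
        exact sq_eq_zero_iff.1 h2
      have hb0 : b = 0 := by
        have h2 : b ^ 2 = 0 := le_antisymm (by linarith [sq_nonneg a]) (sq_nonneg b)
        exact sq_eq_zero_iff.1 h2
      have hcos : Real.cos Θ = Real.cos Φ := by rw [ha] at ha0; linarith
      have hsin : Real.sin Θ = Real.sin Φ := by rw [hb] at hb0; linarith
      have hcos1 : Real.cos (Θ - Φ) = 1 := by
        rw [Real.cos_sub, hcos, hsin]
        nlinarith [Real.sin_sq_add_cos_sq Φ]
      have h1 : -(2 * Real.pi) < Θ - Φ := by
        obtain ⟨hΘ1, hΘ2⟩ := hΘ; obtain ⟨hΦ1, hΦ2⟩ := hΦ; linarith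
      have h2 : Θ - Φ < 2 * Real.pi := by
        obtain ⟨hΘ1, hΘ2⟩ := hΘ; obtain ⟨hΦ1, hΦ2⟩ := hΦ; linarith
      have := (Real.cos_eq_one_iff_of_lt_of_lt h1 h2).1 hcos1
      exact hne (by linarith)
  have hBopen : IsOpen B := (isOpen_Ioo.prod (isOpen_Ioo.prod isOpen_Ioo))
  have hBne : B.Nonempty := by
    refine ⟨(c/3, c/3, 3*c/4), ?_⟩
    simp only [hB, Set.mem_prod, Set.mem_Ioo]
    refine ⟨⟨by linarith, by linarith⟩, ⟨by linarith, by linarith⟩, by linarith, by linarith⟩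
  have hBpos : 0 < volume B := hBopen.measure_pos volume hBne
  exact lt_of_lt_of_le hBpos (measure_mono hsub)

end
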